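/- Let P = (C, V, A, Λ) and P' = (C, V', A', Λ') be approval profiles over the same candidate set C with nonnegative OWA vectors, with score functions sco and sco', and assume |C| ≥ k. Let OPT_k = max{sco(X) : X ⊆ C, |X| = k} and OPT'_k = max{sco'(X) : X ⊆ C, |X| = k}. Let s > 0, h ≥ 0, δ ≥ 0 and β ∈ (0, 1] be rationals, and suppose |sco(X) − s·sco'(X) − h| ≤ δ·OPT_k for every X ⊆ C with |X| = k. Then every Y ⊆ C with |Y| = k and sco'(Y) ≥ β·OPT'_k satisfies sco(Y) ≥ (β − 2δ)·OPT_k. -/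
import Mathlib


open Finset

/-- The score of a committee `S`: each voter `v` (with approval set `A v` and
OWA vector `lam v`) contributes `∑_{j=1}^{|A v ∩ S|} lam v j`. -/
def sco {C V : Type*} [Fintype V] [DecidableEq C]
    (A : V → Finset C) (lam : V → ℕ → ℚ) (S : Finset C) : ℚ :=
  ∑ v : V, ∑ j ∈ Finset.Icc 1 ((A v ∩ S).card), lam v j

/-- Voter-reduction preprocessing: if `|sco X - s·sco' X - h| ≤ δ·OPT` for every size-`k`
committee `X`, then every `β`-approximate solution of the reduced profile is a
`(β - 2δ)`-approximate solution of the original profile. -/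
theorem stmt_8 {C V V' : Type*} [Fintype C] [Fintype V] [Fintype V'] [DecidableEq C]
    (A : V → Finset C) (lam : V → ℕ → ℚ)
    (A' : V' → Finset C) (lam' : V' → ℕ → ℚ)
    (hnonneg : ∀ (v : V) (j : ℕ), 1 ≤ j → 0 ≤ lam v j)
    (hnonneg' : ∀ (v : V') (j : ℕ), 1 ≤ j → 0 ≤ lam' v j)
    (k : ℕ) (hk : k ≤ Fintype.card C)
    (OPT OPT' : ℚ)
    (hOPT : IsGreatest {x : ℚ | ∃ X : Finset C, X.card = k ∧ sco A lam X = x} OPT)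
    (hOPT' : IsGreatest {x : ℚ | ∃ X : Finset C, X.card = k ∧ sco A' lam' X = x} OPT')
    (s h δ β : ℚ) (hs : 0 < s) (hh : 0 ≤ h) (hδ : 0 ≤ δ) (hβ0 : 0 < β) (hβ1 : β ≤ 1)
    (happrox : ∀ X : Finset C, X.card = k →
      |sco A lam X - s * sco A' lam' X - h| ≤ δ * OPT)
    (Y : Finset C) (hY : Y.card = k) (hYsc : β * OPT' ≤ sco A' lam' Y) :
    (β - 2 * δ) * OPT ≤ sco A lam Y := by
  obtain ⟨⟨X, hXc, hXs⟩, hub⟩ := hOPT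
  have hOPTnn : 0 ≤ OPT := by
    rw [← hXs]
    exact Finset.sum_nonneg fun v _ => Finset.sum_nonneg fun j hj =>
      hnonneg v j (Finset.mem_Icc.mp hj).1
  have hX := happrox X hXc
  rw [hXs, abs_le] at hX
  have hY' := happrox Y hY
  rw [abs_le] at hY'
  have hX' : sco A' lam' X ≤ OPT' := hOPT'.2 ⟨X, hXc, rfl⟩
  have h1 : OPT ≤ s * OPT' + h + δ * OPT := by nlinarith [hX.2]
  have h2 : s * (β * OPT') ≤ s * sco A' lam' Y := by nlinarith
  nlinarith [hY'.1, mul_le_mul_of_nonneg_left h1 hβ0.le]
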